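/- Let n ≥ 2, let λ: ℝ → ℂⁿ be a proper C^∞ embedding, let r ≥ 0 be an integer, and let Z = {t₁, …, t_s} ⊂ ℝ be a finite set with λ(t_j) ∈ ℂ × {0}^{n−1} for each j. Let h(ζ) = Π_{j=1}^{s} (ζ − π₁λ(t_j))^{r+1}, where π₁ is projection to the first coordinate, and define Φ: ℂ × ℂ^{n−1} → ℂⁿ by Φ(z₁, α) = (z₁, 0, …, 0) + h(z₁)(0, α). Then for Lebesgue-almost every α ∈ ℂ^{n−1}, the set {Φ(z₁, α) : z₁ ∈ ℂ} intersects λ(ℝ) exactly in λ(Z). -/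

import Mathlib

/-- The embedding `ℂ → ℂⁿ`, `ζ ↦ (ζ, 0, …, 0)`. -/
noncomputable def embC (n : ℕ) (ζ : ℂ) : EuclideanSpace ℂ (Fin (n + 2)) :=
  EuclideanSpace.single 0 ζ

/-- The inclusion `ℂ^{n-1} → ℂⁿ`, `α ↦ (0, α)`. -/
def padC (n : ℕ) (α : Fin (n + 1) → ℂ) : EuclideanSpace ℂ (Fin (n + 2)) :=
  WithLp.toLp 2 (Fin.cons 0 α : Fin (n + 2) → ℂ)

lemma embC_apply_zero (n : ℕ) (ζ : ℂ) : embC n ζ 0 = ζ := by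
  simp [embC, EuclideanSpace.single_apply]

lemma embC_apply_succ (n : ℕ) (ζ : ℂ) (i : Fin (n + 1)) : embC n ζ i.succ = 0 := by
  simp [embC, EuclideanSpace.single_apply, Fin.succ_ne_zero]

lemma padC_apply_zero (n : ℕ) (α : Fin (n + 1) → ℂ) : padC n α 0 = 0 := rfl

lemma padC_apply_succ (n : ℕ) (α : Fin (n + 1) → ℂ) (i : Fin (n + 1)) :
    padC n α i.succ = α i := by
  simp [padC]

open MeasureTheory in
/-- **Generic perturbations of the line miss a proper embedding of `ℝ` outside `λ(Z)`.**
Let `n ≥ 2` (here `ℂⁿ` is `ℂ^(n+2)`), `λ : ℝ → ℂⁿ` a proper `C^∞` embedding, `r ≥ 0`,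
and `Z ⊂ ℝ` finite with `λ(t) ∈ ℂ × {0}^{n-1}` for `t ∈ Z`.  With
`h(ζ) = Π_{t ∈ Z} (ζ − π₁λ(t))^{r+1}` and `Φ(z₁, α) = (z₁, 0, …, 0) + h(z₁)(0, α)`,
for Lebesgue-almost every `α ∈ ℂ^{n-1}` the set `{Φ(z₁, α) : z₁ ∈ ℂ}` intersects `λ(ℝ)`
exactly in `λ(Z)`. -/
theorem generic_shear_line_meets_curve_only_in_Z
    (n : ℕ)
    (lam : ℝ → EuclideanSpace ℂ (Fin (n + 2)))
    (hlam_smooth : ContDiff ℝ (⊤ : ℕ∞) lam)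
    (hlam_inj : Function.Injective lam)
    (hlam_proper : IsProperMap lam)
    (hlam_imm : ∀ t : ℝ, deriv lam t ≠ 0)
    (r : ℕ)
    (Z : Finset ℝ)
    (hZ_line : ∀ t ∈ Z, lam t ∈ Set.range (embC n)) :
    ∀ᵐ α : Fin (n + 1) → ℂ,
      (Set.range fun z₁ : ℂ =>
          embC n z₁ + (∏ t ∈ Z, (z₁ - lam t 0) ^ (r + 1)) • padC n α)
        ∩ Set.range lam = lam '' (Z : Set ℝ) := by
  classical
  -- For `t ∈ Z`, `lam t` is `embC` of its first coordinate.
  have hline : ∀ t ∈ Z, lam t = embC n (lam t 0) := by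
    intro t ht
    obtain ⟨ζ, hζ⟩ := hZ_line t ht
    rw [← hζ, embC_apply_zero]
  -- the product function
  set q : ℝ → ℂ := fun t => ∏ t' ∈ Z, (lam t 0 - lam t' 0) ^ (r + 1) with hqdef
  have hqZ : ∀ t ∈ Z, q t = 0 := by
    intro t ht
    exact Finset.prod_eq_zero ht (by simp)
  -- coordinates of lam are differentiable
  have hcoord : ∀ j : Fin (n + 2), Differentiable ℝ fun t : ℝ => lam t j := by
    intro j
    exact ((EuclideanSpace.proj j :
        EuclideanSpace ℂ (Fin (n + 2)) →L[ℂ] ℂ).restrictScalars ℝ).differentiable.comp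
      (hlam_smooth.differentiable (by simp))
  have hqdiff : Differentiable ℝ q :=
    Differentiable.fun_finset_prod fun t' _ => ((hcoord 0).sub_const _).pow _
  set U : Set ℝ := {t | q t ≠ 0} with hUdef
  have hUopen : IsOpen U := isOpen_compl_singleton.preimage hqdiff.continuous
  -- the bad-parameter curve
  set g : ℝ → Fin (n + 1) → ℂ := fun t i => lam t i.succ / q t with hgdef
  have hgdiff : DifferentiableOn ℝ g U := by
    rw [differentiableOn_pi]
    intro i
    exact ((hcoord i.succ).differentiableOn).div hqdiff.differentiableOn fun t ht => ht
  -- projection to ℝ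
  set πL : (Fin (n + 1) → ℂ) →L[ℝ] ℝ :=
    Complex.reCLM.comp (ContinuousLinearMap.proj (R := ℝ) 0) with hπdef
  have hπsurj : Function.Surjective πL := by
    intro t
    refine ⟨fun _ => (t : ℂ), ?_⟩
    simp [hπdef]
  -- the image of g on U is Lebesgue-null
  have hnull : volume (g '' U) = 0 := by
    have himg : g '' U = (g ∘ πL) '' (πL ⁻¹' U) := by
      rw [Set.image_comp, Set.image_preimage_eq U hπsurj]
    rw [himg]
    refine addHaar_image_eq_zero_of_det_fderivWithin_eq_zero volume
      (f' := fun x => (fderiv ℝ g (πL x)).comp πL) ?_ ?_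
    · intro x hx
      have hd : DifferentiableAt ℝ g (πL x) :=
        hgdiff.differentiableAt (hUopen.mem_nhds hx)
      exact (hd.hasFDerivAt.comp x (πL.hasFDerivAt)).hasFDerivWithinAt
    · intro x _
      set A := (fderiv ℝ g (πL x)).comp πL with hA
      have : ∃ m : Fin (n + 1) → ℂ, m ≠ 0 ∧ A.toLinearMap m = 0 := by
        refine ⟨fun _ => Complex.I, ?_, ?_⟩
        · intro h
          have := congrFun h 0
          simpa [Complex.I_ne_zero] using this
        · have hπ0 : πL (fun _ => Complex.I) = 0 := by simp [hπdef]
          show A (fun _ => Complex.I) = 0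
          rw [hA]
          simp only [ContinuousLinearMap.comp_apply, hπ0, map_zero]
      show LinearMap.det A.toLinearMap = 0
      exact ((LinearMap.hasEigenvalue_zero_tfae A.toLinearMap).out 5 3).mp this
  -- main geometric argument for good parameters
  have main : ∀ α : Fin (n + 1) → ℂ, α ∉ g '' U →
      (Set.range fun z₁ : ℂ =>
          embC n z₁ + (∏ t ∈ Z, (z₁ - lam t 0) ^ (r + 1)) • padC n α)
        ∩ Set.range lam = lam '' (Z : Set ℝ) := by
    intro α hα
    ext x
    constructor
    · rintro ⟨⟨z₁, hz⟩, ⟨t, ht⟩⟩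
      -- first coordinate forces z₁ = lam t 0
      have hxz : lam t = embC n z₁ + (∏ t' ∈ Z, (z₁ - lam t' 0) ^ (r + 1)) • padC n α := by
        rw [ht, ← hz]
      have h0 : lam t 0 = z₁ := by
        have := congrArg (fun v : EuclideanSpace ℂ (Fin (n + 2)) => v 0) hxz
        simpa [embC_apply_zero, padC_apply_zero] using this
      have hsucc : ∀ i : Fin (n + 1), lam t i.succ = q t * α i := by
        intro i
        have := congrArg (fun v : EuclideanSpace ℂ (Fin (n + 2)) => v i.succ) hxz
        simpa [embC_apply_succ, padC_apply_succ, hqdef, h0] using this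
      by_cases hqt : q t = 0
      · -- lam t lies on the line and coincides with some lam t', t' ∈ Z
        have hlamt : lam t = embC n (lam t 0) := by
          ext j
          refine Fin.cases ?_ ?_ j
          · rw [embC_apply_zero]
          · intro i
            rw [embC_apply_succ, hsucc i, hqt, zero_mul]
        obtain ⟨t', ht', hft'⟩ := Finset.prod_eq_zero_iff.1 hqt
        have h00 : lam t 0 = lam t' 0 := by
          have := pow_eq_zero_iff (Nat.succ_ne_zero r) |>.1 hft'
          linear_combination this
        have : lam t = lam t' := by
          rw [hlamt, h00, ← hline t' ht']
        have htt : t = t' := hlam_inj this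
        exact ⟨t, by simpa [htt] using ht', by rw [← ht]⟩
      · -- otherwise α would be on the bad curve
        exfalso
        apply hα
        refine ⟨t, hqt, ?_⟩
        funext i
        rw [hgdef]
        simp only
        rw [hsucc i, mul_comm, mul_div_assoc, div_self hqt, mul_one]
    · rintro ⟨t, htZ, rfl⟩
      refine ⟨⟨lam t 0, ?_⟩, ⟨t, rfl⟩⟩
      show embC n (lam t 0) + (q t) • padC n α = lam t
      rw [hqZ t htZ, zero_smul, add_zero]
      exact (hline t htZ).symm
  -- conclude
  rw [MeasureTheory.ae_iff]
  refine measure_mono_null ?_ hnull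
  intro α hne
  by_contra hmem
  exact hne (main α hmem)
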